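/- arXiv:1107.3473 — 2 statements merged into one kernel-verified Lean document; each statement's English description precedes it below -/
import Mathlib

section
/- If a sequence a(n) satisfies a linear recurrence with constant coefficients of order L1 and b(n) satisfies one of order L2, then the pointwise (Hadamard) product a(n)·b(n) satisfies a linear recurrence with constant coefficients of order at most L1·L2. -/
open Submodule

noncomputable def shiftL : (ℕ → ℂ) →ₗ[ℂ] (ℕ → ℂ) where
  toFun f := fun n => f (n + 1)
  map_add' _ _ := rfl
  map_smul' _ _ := rfl

lemma shiftL_pow (f : ℕ → ℂ) (k n : ℕ) : (shiftL ^ k) f n = f (n + k) := by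
  induction k generalizing n with
  | zero => rfl
  | succ k ih =>
    rw [pow_succ', Module.End.mul_apply]
    show (shiftL ^ k) f (n + 1) = f (n + (k + 1))
    rw [ih]
    congr 1
    omega

noncomputable def stepCoeff (L : ℕ) (c : Fin L → ℂ) (i : Fin L) : Fin L → ℂ :=
  fun i' => if h : (i : ℕ) + 1 < L then (if i' = ⟨(i : ℕ) + 1, h⟩ then 1 else 0) else c i'.rev

lemma step (L : ℕ) (c : Fin L → ℂ) (a : ℕ → ℂ)
    (ha : ∀ n ≥ L, a n = ∑ i : Fin L, c i * a (n - ((i : ℕ) + 1))) (i : Fin L) (n : ℕ) :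
    a (n + ((i : ℕ) + 1)) = ∑ i' : Fin L, stepCoeff L c i i' * a (n + (i' : ℕ)) := by
  by_cases h : (i : ℕ) + 1 < L
  · have : ∀ i' : Fin L, stepCoeff L c i i' * a (n + (i' : ℕ))
        = if i' = (⟨(i : ℕ) + 1, h⟩ : Fin L) then a (n + (i' : ℕ)) else 0 := by
      intro i'
      rw [stepCoeff, dif_pos h]
      split <;> simp
    rw [Finset.sum_congr rfl (fun i' _ => this i'), Finset.sum_ite_eq']
    simp
  · have hiL : (i : ℕ) + 1 = L := by omega
    have key := ha (n + L) (by omega)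
    have hrw : ∀ k : Fin L, c k * a (n + L - ((k : ℕ) + 1)) = c k * a (n + ((k.rev : ℕ))) := by
      intro k
      congr 2
      rw [Fin.val_rev]
      omega
    rw [Finset.sum_congr rfl (fun k _ => hrw k)] at key
    have hsum : ∑ i' : Fin L, stepCoeff L c i i' * a (n + (i' : ℕ))
        = ∑ k : Fin L, stepCoeff L c i (Fin.revPerm k) * a (n + ((Fin.revPerm k : Fin L) : ℕ)) :=
      (Equiv.sum_comp Fin.revPerm (fun i' => stepCoeff L c i i' * a (n + (i' : ℕ)))).symm
    rw [hsum]
    have : ∀ k : Fin L, stepCoeff L c i (Fin.revPerm k) * a (n + ((Fin.revPerm k : Fin L) : ℕ))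
        = c k * a (n + ((k.rev : ℕ))) := by
      intro k
      rw [stepCoeff, dif_neg h]
      simp [Fin.rev_rev]
    rw [Finset.sum_congr rfl (fun k _ => this k), ← key]
    congr 1
    omega

theorem cfinite_mul (a b : ℕ → ℂ) (L1 L2 : ℕ) (c : Fin L1 → ℂ) (d : Fin L2 → ℂ)
    (ha : ∀ n ≥ L1, a n = ∑ i : Fin L1, c i * a (n - ((i : ℕ) + 1)))
    (hb : ∀ n ≥ L2, b n = ∑ j : Fin L2, d j * b (n - ((j : ℕ) + 1))) :
    ∃ L ≤ L1 * L2, ∃ e : Fin L → ℂ,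
      ∀ n ≥ L, a n * b n = ∑ i : Fin L, e i * (a (n - ((i : ℕ) + 1)) * b (n - ((i : ℕ) + 1))) := by
  classical
  rcases Nat.eq_zero_or_pos L1 with h1 | h1
  · subst h1
    refine ⟨0, Nat.zero_le _, Fin.elim0, fun n _ => ?_⟩
    have : a n = 0 := by simpa using ha n (Nat.zero_le n)
    simp [this]
  rcases Nat.eq_zero_or_pos L2 with h2 | h2
  · subst h2
    refine ⟨0, by simp, Fin.elim0, fun n _ => ?_⟩
    have : b n = 0 := by simpa using hb n (Nat.zero_le n)
    simp [this]
  -- the spanning family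
  set v : Fin L1 × Fin L2 → (ℕ → ℂ) :=
    fun p => fun n => a (n + (p.1 : ℕ)) * b (n + (p.2 : ℕ)) with hv
  set W : Submodule ℂ (ℕ → ℂ) := Submodule.span ℂ (Set.range v) with hWdef
  have hFD : FiniteDimensional ℂ W := FiniteDimensional.span_of_finite ℂ (Set.finite_range v)
  have hrank : Module.finrank ℂ W ≤ L1 * L2 := by
    refine (finrank_span_le_card (R := ℂ) (Set.range v)).trans ?_
    calc (Set.range v).toFinset.card ≤ Fintype.card (Fin L1 × Fin L2) := by
          rw [Set.toFinset_range]
          exact (Finset.card_image_le).trans (by simp)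
      _ = L1 * L2 := by simp
  -- generators shift into W
  have hgen : ∀ p : Fin L1 × Fin L2, shiftL (v p) ∈ W := by
    rintro ⟨i, j⟩
    have hfun : shiftL (v (i, j)) = ∑ i' : Fin L1, ∑ j' : Fin L2,
        (stepCoeff L1 c i i' * stepCoeff L2 d j j') • v (i', j') := by
      funext n
      have e1 : n + 1 + (i : ℕ) = n + ((i : ℕ) + 1) := by omega
      have e2 : n + 1 + (j : ℕ) = n + ((j : ℕ) + 1) := by omega
      show a (n + 1 + (i : ℕ)) * b (n + 1 + (j : ℕ)) = _
      rw [e1, e2, step L1 c a ha i n, step L2 d b hb j n, Finset.sum_mul_sum]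
      simp only [Finset.sum_apply, Pi.smul_apply, smul_eq_mul, hv]
      refine Finset.sum_congr rfl fun i' _ => Finset.sum_congr rfl fun j' _ => by ring
    rw [hfun]
    exact sum_mem fun i' _ => sum_mem fun j' _ =>
      smul_mem _ _ (subset_span ⟨(i', j'), rfl⟩)
  have hW : ∀ f ∈ W, shiftL f ∈ W := by
    intro f hf
    induction hf using Submodule.span_induction with
    | mem x hx => obtain ⟨p, rfl⟩ := hx; exact hgen p
    | zero => rw [map_zero]; exact zero_mem W
    | add x y _ _ hx hy => rw [map_add]; exact add_mem hx hy
    | smul r x _ hx => rw [map_smul]; exact smul_mem _ _ hx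
  set p : ℕ → ℂ := v (⟨0, h1⟩, ⟨0, h2⟩) with hp
  set u : ℕ → (ℕ → ℂ) := fun k => (shiftL ^ k) p with hu
  have hmem : ∀ k, u k ∈ W := by
    intro k
    induction k with
    | zero => exact subset_span ⟨(⟨0, h1⟩, ⟨0, h2⟩), rfl⟩
    | succ k ih =>
      have : u (k + 1) = shiftL (u k) := by
        rw [hu]; simp only [pow_succ']; rfl
      rw [this]
      exact hW _ ih
  set N := L1 * L2 with hN
  -- find minimal dependence
  have hdep : ∃ k ≤ N, u k ∈ Submodule.span ℂ (Set.range fun i : Fin k => u i) := by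
    by_contra hcon
    push_neg at hcon
    have indep : ∀ m, m ≤ N + 1 → LinearIndependent ℂ (fun i : Fin m => u (i : ℕ)) := by
      intro m
      induction m with
      | zero => intro _; exact linearIndependent_empty_type
      | succ m ih =>
        intro hm
        have hmN : m ≤ N := by omega
        have heq : (fun i : Fin (m + 1) => u (i : ℕ))
            = Fin.snoc (fun i : Fin m => u (i : ℕ)) (u m) := by
          funext i
          refine Fin.lastCases ?_ ?_ i
          · simp [Fin.snoc_last]
          · intro j; simp [Fin.snoc_castSucc]
        rw [heq, linearIndependent_fin_snoc]
        exact ⟨ih (by omega), hcon m hmN⟩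
    have hind := indep (N + 1) le_rfl
    set w : Fin (N + 1) → W := fun i => ⟨u (i : ℕ), hmem i⟩ with hw
    have : LinearIndependent ℂ w := by
      apply LinearIndependent.of_comp W.subtype
      exact hind
    have hcard := this.fintype_card_le_finrank
    simp only [Fintype.card_fin] at hcard
    omega
  obtain ⟨k, hkN, hk⟩ := hdep
  rw [mem_span_range_iff_exists_fun] at hk
  obtain ⟨e', he'⟩ := hk
  refine ⟨k, hkN, fun j => e' j.rev, fun n hn => ?_⟩
  have hpt : ∀ m, p (m + k) = ∑ i : Fin k, e' i * p (m + (i : ℕ)) := by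
    intro m
    have := congrFun he' m
    simp only [Finset.sum_apply, Pi.smul_apply, smul_eq_mul, hu, shiftL_pow] at this
    exact this.symm
  have hpn : a n * b n = p n := by
    simp [hp, hv]
  have key := hpt (n - k)
  have hnk : n - k + k = n := by omega
  rw [hnk] at key
  rw [hpn, key]
  have := (Equiv.sum_comp Fin.revPerm
      (fun j : Fin k => e' j.rev * (a (n - ((j : ℕ) + 1)) * b (n - ((j : ℕ) + 1))))).symm
  rw [this]
  refine Finset.sum_congr rfl fun i _ => ?_
  simp only [Fin.revPerm_apply, Fin.rev_rev]
  have harg : n - (((Fin.rev i : Fin k) : ℕ) + 1) = n - k + (i : ℕ) := by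
    rw [Fin.val_rev]
    have := i.isLt
    omega
  rw [harg]
  simp [hp, hv]
end

section
/- The generating function identity ∑_{n≥0} U_n(a) U_n(b) t^n = (1−t²)/(1 − 4abt − (2 − 4a² − 4b²)t² − 4abt³ + t⁴) holds as an identity of formal power series in t with coefficients polynomials in a and b, where U_n are the Chebyshev polynomials of the second kind. -/
def chebU {R : Type*} [CommRing R] (x : R) : ℕ → R
  | 0 => 1
  | 1 => 2 * x
  | (n + 2) => 2 * x * chebU x (n + 1) - chebU x n

open PowerSeries in
lemma coeff_term {R : Type*} [CommRing R] (r : R) (k n : ℕ) (F : R⟦X⟧) :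
    (coeff n) (C r * X ^ k * F) = if k ≤ n then r * coeff (n - k) F else 0 := by
  rw [mul_right_comm, PowerSeries.coeff_mul_X_pow']
  split <;> simp [PowerSeries.coeff_C_mul]

open PowerSeries in
theorem shapiro_chebU_gf :
    let R := MvPolynomial (Fin 2) ℂ
    let a : R := MvPolynomial.X 0
    let b : R := MvPolynomial.X 1
    (1 - C (4 * a * b) * X - C (2 - 4 * a ^ 2 - 4 * b ^ 2) * X ^ 2
        - C (4 * a * b) * X ^ 3 + X ^ 4)
      * PowerSeries.mk (fun n => chebU a n * chebU b n)
      = 1 - X ^ 2 := by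
  intro R a b
  set f : ℕ → R := fun n => chebU a n * chebU b n with hf
  set c1 : R := 4 * a * b with hc1
  set c2 : R := 2 - 4 * a ^ 2 - 4 * b ^ 2 with hc2
  ext n : 1
  rw [show (1 - C c1 * X - C c2 * X ^ 2 - C c1 * X ^ 3 + X ^ 4) * PowerSeries.mk f
      = PowerSeries.mk f - C c1 * X ^ 1 * PowerSeries.mk f
        - C c2 * X ^ 2 * PowerSeries.mk f
        - C c1 * X ^ 3 * PowerSeries.mk f
        + PowerSeries.mk f * X ^ 4 by rw [pow_one]; ring]
  simp only [map_sub, map_add, coeff_term, PowerSeries.coeff_mul_X_pow', coeff_mk,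
    PowerSeries.coeff_one, PowerSeries.coeff_X_pow]
  match n with
  | 0 => simp [hf, chebU]
  | 1 => norm_num [hf, hc1, chebU]; ring
  | 2 => norm_num [hf, hc1, hc2, chebU]; ring
  | 3 => norm_num [hf, hc1, hc2, chebU]; ring
  | (m + 4) =>
    have h0 : ¬ (m + 4 = 0) := by omega
    have h2 : ¬ (m + 4 = 2) := by omega
    norm_num [h0, h2, hf, hc1, hc2]
    simp only [show m + 4 - 1 = m + 3 from rfl, show m + 4 - 2 = m + 2 from rfl,
      show m + 4 - 3 = m + 1 from rfl, show m + 4 - 4 = m from rfl]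
    simp only [show ∀ k, m + k + 2 = (m + k) + 2 from fun k => rfl, chebU]
    ring
end
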